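/- Let p ∈ frontier Z be a simple nondegenerate point with associated neighborhood U_p. Suppose there exist a compact set K ⊆ U_p that is a neighborhood of p and ρ > 0 such that {x ∈ K | f x = t} is nonempty for every t ∈ (0, ρ) and the function β^K is NOT Lebesgue integrable on (0, ρ). Then there exist ρ' > 0, an open neighborhood U of p, and b : ℝ → ℝ continuous and strictly positive on (0, ρ'] with t ↦ (b t)⁻¹ NOT Lebesgue integrable on (0, ρ'), such that ‖∇f x‖ ≤ b (f x) for every x ∈ U with 0 < f x ≤ ρ'. -/

import Mathlib

open Set MeasureTheory

-- inf-convolution basics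
section infconv
variable {R : ℝ} {g : ℝ → ℝ}

noncomputable def iconv (g : ℝ → ℝ) (R : ℝ) (n : ℕ) (t : ℝ) : ℝ :=
  sInf ((fun s => g s + n * |t - s|) '' Ioo 0 R)

lemma iconv_set_nonempty (hR : 0 < R) (n : ℕ) (t : ℝ) :
    ((fun s => g s + n * |t - s|) '' Ioo 0 R).Nonempty :=
  (Set.nonempty_Ioo.2 hR).image _

lemma iconv_set_bdd (h0 : ∀ t, 0 ≤ g t) (n : ℕ) (t : ℝ) :
    BddBelow ((fun s => g s + n * |t - s|) '' Ioo 0 R) := by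
  refine ⟨0, fun y hy => ?_⟩
  obtain ⟨s, -, rfl⟩ := hy
  have := h0 s
  positivity

lemma iconv_nonneg (hR : 0 < R) (h0 : ∀ t, 0 ≤ g t) (n : ℕ) (t : ℝ) :
    0 ≤ iconv g R n t := by
  refine le_csInf (iconv_set_nonempty hR n t) (fun y hy => ?_)
  obtain ⟨s, -, rfl⟩ := hy
  have := h0 s
  positivity

lemma iconv_le (h0 : ∀ t, 0 ≤ g t) (n : ℕ) {t : ℝ} (ht : t ∈ Ioo 0 R) :
    iconv g R n t ≤ g t := by
  have : g t = g t + n * |t - t| := by simp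
  rw [this]
  exact csInf_le (iconv_set_bdd h0 n t) ⟨t, ht, rfl⟩

lemma iconv_mono (hR : 0 < R) (h0 : ∀ t, 0 ≤ g t) {n m : ℕ} (hnm : n ≤ m) (t : ℝ) :
    iconv g R n t ≤ iconv g R m t := by
  refine le_csInf (iconv_set_nonempty hR m t) (fun y hy => ?_)
  obtain ⟨s, hs, rfl⟩ := hy
  dsimp only
  have h1 : iconv g R n t ≤ g s + n * |t - s| :=
    csInf_le (iconv_set_bdd h0 n t) ⟨s, hs, rfl⟩
  have : (n:ℝ) * |t - s| ≤ m * |t - s| := by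
    apply mul_le_mul_of_nonneg_right (by exact_mod_cast hnm) (abs_nonneg _)
  linarith

lemma iconv_lip (hR : 0 < R) (h0 : ∀ t, 0 ≤ g t) (n : ℕ) (t t' : ℝ) :
    iconv g R n t ≤ iconv g R n t' + n * |t - t'| := by
  have : iconv g R n t - n * |t - t'| ≤ iconv g R n t' := by
    refine le_csInf (iconv_set_nonempty hR n t') (fun y hy => ?_)
    obtain ⟨s, hs, rfl⟩ := hy
    dsimp only
    have h1 : iconv g R n t ≤ g s + n * |t - s| :=
      csInf_le (iconv_set_bdd h0 n t) ⟨s, hs, rfl⟩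
    have h2 : |t - s| ≤ |t - t'| + |t' - s| := abs_sub_le t t' s
    nlinarith [abs_nonneg (t - t'), abs_nonneg (t' - s), n.cast_nonneg (α := ℝ)]
  linarith

lemma iconv_continuous (hR : 0 < R) (h0 : ∀ t, 0 ≤ g t) (n : ℕ) :
    Continuous (iconv g R n) := by
  refine (LipschitzWith.of_dist_le_mul (K := ⟨n, n.cast_nonneg⟩) fun t t' => ?_).continuous
  rw [Real.dist_eq, Real.dist_eq, abs_le]
  constructor
  · have := iconv_lip hR h0 n t' t
    have h : |t' - t| = |t - t'| := abs_sub_comm _ _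
    change -((n:ℝ) * |t - t'|) ≤ iconv g R n t - iconv g R n t'
    nlinarith [this, h]
  · have := iconv_lip hR h0 n t t'
    change iconv g R n t - iconv g R n t' ≤ (n:ℝ) * |t - t'|
    nlinarith

end infconv

section props
variable {R : ℝ} {g : ℝ → ℝ}

lemma iconv_pos (hR : 0 < R) (h0 : ∀ t, 0 ≤ g t)
    (hlb : ∀ a, 0 < a → a < R → ∃ c > 0, ∀ t, a ≤ t → t < R → c ≤ g t)
    {t : ℝ} (ht : 0 < t) : 0 < iconv g R 1 t := by
  set a := min (t / 2) (R / 2) with ha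
  have ha0 : 0 < a := lt_min (by linarith) (by linarith)
  have haR : a < R := lt_of_le_of_lt (min_le_right _ _) (by linarith)
  obtain ⟨c, hc, hcg⟩ := hlb a ha0 haR
  refine lt_of_lt_of_le (lt_min hc (by linarith : (0:ℝ) < t / 2)) ?_
  refine le_csInf (iconv_set_nonempty hR 1 t) (fun y hy => ?_)
  obtain ⟨s, hs, rfl⟩ := hy
  dsimp only
  rcases le_or_gt a s with h | h
  · have := hcg s h hs.2
    have := abs_nonneg (t - s)
    simp only [Nat.cast_one, one_mul]
    linarith [min_le_left c (t/2)]
  · have hs2 : s < t / 2 := lt_of_lt_of_le h (min_le_left _ _)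
    have : t / 2 ≤ |t - s| := by
      rw [abs_of_pos (by linarith)]
      linarith
    have := h0 s
    simp only [Nat.cast_one, one_mul]
    linarith [min_le_right c (t/2)]

lemma iconv_tendsto (hR : 0 < R) (h0 : ∀ t, 0 ≤ g t)
    (hlsc : ∀ t ∈ Ioo 0 R, ∀ ε > 0, ∃ δ > 0, ∀ s ∈ Ioo 0 R, |s - t| < δ → g t - ε < g s)
    {t : ℝ} (ht : t ∈ Ioo 0 R) :
    Filter.Tendsto (fun n => iconv g R n t) Filter.atTop (nhds (g t)) := by
  rw [Metric.tendsto_atTop]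
  intro ε hε
  obtain ⟨δ, hδ, hδg⟩ := hlsc t ht (ε/2) (by linarith)
  refine ⟨⌈g t / δ⌉₊, fun n hn => ?_⟩
  have hlow : g t - ε/2 ≤ iconv g R n t := by
    refine le_csInf (iconv_set_nonempty hR n t) (fun y hy => ?_)
    obtain ⟨s, hs, rfl⟩ := hy
    dsimp only
    rcases lt_or_ge |t - s| δ with h | h
    · have := hδg s hs (by rwa [abs_sub_comm])
      have h1 : (0:ℝ) ≤ n * |t - s| := by positivity
      linarith
    · have h1 : g t / δ ≤ n := le_trans (Nat.le_ceil _) (by exact_mod_cast hn)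
      have h2 : g t ≤ n * δ := by
        rw [div_le_iff₀ hδ] at h1
        linarith
      have h3 : (n:ℝ) * δ ≤ n * |t - s| :=
        mul_le_mul_of_nonneg_left h (n.cast_nonneg)
      have := h0 s
      linarith
  have hup : iconv g R n t ≤ g t := iconv_le h0 n ht
  rw [Real.dist_eq, abs_lt]
  constructor <;> linarith

end props

section minorant
variable {R : ℝ} {g : ℝ → ℝ}

lemma exists_minorant (hR : 0 < R) (h0 : ∀ t, 0 ≤ g t)
    (hlb : ∀ a, 0 < a → a < R → ∃ c > 0, ∀ t, a ≤ t → t < R → c ≤ g t)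
    (hub : ∀ a, 0 < a → a < R → ∃ C, ∀ t, a ≤ t → t < R → g t ≤ C)
    (hlsc : ∀ t ∈ Ioo 0 R, ∀ ε > 0, ∃ δ > 0, ∀ s ∈ Ioo 0 R, |s - t| < δ → g t - ε < g s)
    (hni : ¬ IntegrableOn g (Ioo 0 R)) :
    ∃ h : ℝ → ℝ, (∀ t, 0 < t → ContinuousAt h t) ∧ (∀ t, 0 < t → 0 < h t) ∧
      (∀ t ∈ Ioo 0 R, h t ≤ g t) ∧ ¬ IntegrableOn h (Ioo 0 (R/4)) := by
  -- the enveloping supremum function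
  set G : ℝ → ENNReal := fun t => ⨆ n, ENNReal.ofReal (iconv g R n t) with hG
  have hGmeas : Measurable G :=
    Measurable.iSup fun n => ((iconv_continuous hR h0 n).measurable).ennreal_ofReal
  have hGeq : ∀ t ∈ Ioo 0 R, G t = ENNReal.ofReal (g t) := by
    intro t ht
    have hmono : Monotone fun n => ENNReal.ofReal (iconv g R n t) :=
      fun a b hab => ENNReal.ofReal_le_ofReal (iconv_mono hR h0 hab t)
    exact tendsto_nhds_unique (tendsto_atTop_iSup hmono)
      (ENNReal.tendsto_ofReal (iconv_tendsto hR h0 hlsc ht))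
  have hGtop : ∫⁻ t in Ioo 0 R, G t = ⊤ := by
    by_contra hfin
    apply hni
    have hae : (fun t => (G t).toReal) =ᵐ[volume.restrict (Ioo 0 R)] g := by
      filter_upwards [ae_restrict_mem measurableSet_Ioo] with t ht
      rw [hGeq t ht, ENNReal.toReal_ofReal (h0 t)]
    constructor
    · exact (hGmeas.ennreal_toReal.aestronglyMeasurable).congr hae
    · rw [hasFiniteIntegral_iff_norm]
      have hae2 : (fun t => ENNReal.ofReal ‖g t‖) =ᵐ[volume.restrict (Ioo 0 R)] G := by
        filter_upwards [ae_restrict_mem measurableSet_Ioo] with t ht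
        rw [Real.norm_eq_abs, abs_of_nonneg (h0 t), hGeq t ht]
      rw [lintegral_congr_ae hae2]
      exact lt_top_iff_ne_top.2 hfin
  have hR4 : 0 < R / 4 := by linarith
  have hR4R : R / 4 < R := by linarith
  -- split off the part away from 0
  have hGtop' : ∫⁻ t in Ioo 0 (R/4), G t = ⊤ := by
    obtain ⟨C, hC⟩ := hub (R/4) hR4 hR4R
    have hsplit : Ioo (0:ℝ) (R/4) ∪ Ico (R/4) R = Ioo 0 R :=
      Set.Ioo_union_Ico_eq_Ioo hR4 (le_of_lt hR4R)
    have hdisj : Disjoint (Ioo (0:ℝ) (R/4)) (Ico (R/4) R) := by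
      refine Set.disjoint_left.2 fun x hx hx' => ?_
      exact absurd hx.2 (not_lt.2 hx'.1)
    rw [← hsplit, lintegral_union measurableSet_Ico hdisj] at hGtop
    have hfin2 : ∫⁻ t in Ico (R/4) R, G t ≠ ⊤ := by
      have hb : ∫⁻ t in Ico (R/4) R, G t ≤ ENNReal.ofReal C * volume (Ico (R/4) R) := by
        rw [← setLIntegral_const]
        refine setLIntegral_mono' measurableSet_Ico fun t ht => ?_
        rw [hGeq t ⟨lt_of_lt_of_le hR4 ht.1, ht.2⟩]
        exact ENNReal.ofReal_le_ofReal (hC t ht.1 ht.2)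
      refine ne_top_of_le_ne_top ?_ hb
      exact ENNReal.mul_ne_top ENNReal.ofReal_ne_top (by rw [Real.volume_Ico]; exact ENNReal.ofReal_ne_top)
    rcases ENNReal.add_eq_top.1 hGtop with h | h
    · exact h
    · exact absurd h hfin2
  -- dyadic partition of (0, R/4)
  set a : ℕ → ℝ := fun k => R/4 / 2^k with ha
  have hapos : ∀ k, 0 < a k := fun k => by rw [ha]; positivity
  have hasucc : ∀ k, a (k+1) < a k := by
    intro k
    rw [ha]
    exact div_lt_div_of_pos_left (by linarith) (by positivity)
      (by rw [pow_succ]; nlinarith [pow_pos (by norm_num : (0:ℝ) < 2) k])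
  have haanti : StrictAnti a := strictAnti_nat_of_succ_lt hasucc
  have ha0 : a 0 = R/4 := by rw [ha]; simp
  have haR4 : ∀ k, a k ≤ R/4 := fun k => ha0 ▸ haanti.antitone (Nat.zero_le k)
  set I : ℕ → Set ℝ := fun k => Ico (a (k+1)) (a k) with hI
  have hImeas : ∀ k, MeasurableSet (I k) := fun k => measurableSet_Ico
  have hIdisj : Pairwise (Function.onFun Disjoint I) := by
    have key : ∀ {k l}, k < l → Disjoint (I k) (I l) := by
      intro k l hkl
      refine Set.disjoint_left.2 fun x hx hx' => ?_
      have h1 : x < a l := hx'.2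
      have h2 : a l ≤ a (k+1) := haanti.antitone hkl
      exact absurd hx.1 (not_le.2 (lt_of_lt_of_le h1 h2))
    intro k l hkl
    rcases hkl.lt_or_gt with h | h
    · exact key h
    · exact (key h).symm
  have hIsub : ∀ k, I k ⊆ Ioo 0 R := by
    intro k x hx
    exact ⟨lt_of_lt_of_le (hapos _) hx.1,
      lt_of_lt_of_le (lt_of_lt_of_le hx.2 (haR4 k)) (le_of_lt hR4R)⟩
  have hIunion : ⋃ k, I k = Ioo 0 (R/4) := by
    ext x
    simp only [mem_iUnion]
    constructor
    · rintro ⟨k, hx⟩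
      exact ⟨lt_of_lt_of_le (hapos _) hx.1, lt_of_lt_of_le hx.2 (haR4 k)⟩
    · intro hx
      have hex : ∃ j, a j ≤ x := by
        obtain ⟨j, hj⟩ := pow_unbounded_of_one_lt (R := ℝ) ((R/4) / x) one_lt_two
        refine ⟨j, ?_⟩
        rw [ha]
        rw [div_lt_iff₀ hx.1] at hj
        rw [div_le_iff₀ (by positivity : (0:ℝ) < 2^j)]
        nlinarith
      have hspec : a (Nat.find hex) ≤ x := Nat.find_spec hex
      have hj0ne : Nat.find hex ≠ 0 := by
        intro h
        rw [h, ha0] at hspec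
        exact absurd hx.2 (not_lt.2 hspec)
      obtain ⟨k, hk⟩ := Nat.exists_eq_succ_of_ne_zero hj0ne
      refine ⟨k, ?_, ?_⟩
      · have hk' : k + 1 = Nat.find hex := by omega
        rw [hk']
        exact hspec
      · by_contra hcon
        push_neg at hcon
        exact Nat.find_min hex (by omega) hcon
  set m : ℕ → ENNReal := fun k => ∫⁻ t in I k, G t with hm
  have hmsum : ∑' k, m k = ⊤ := by
    rw [hm]
    rw [← lintegral_iUnion hImeas hIdisj, hIunion]
    exact hGtop'
  have hBk : ∀ k, ∃ B, 0 < B ∧ ∀ t, a (k+1) ≤ t → t < R → g t ≤ B := by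
    intro k
    obtain ⟨C, hC⟩ := hub (a (k+1)) (hapos _)
      (lt_of_le_of_lt (haR4 _) hR4R)
    exact ⟨max C 1, lt_of_lt_of_le one_pos (le_max_right _ _),
      fun t h1 h2 => le_trans (hC t h1 h2) (le_max_left _ _)⟩
  choose B hBpos hB using hBk
  have hmfin : ∀ k, m k ≠ ⊤ := by
    intro k
    have hb : m k ≤ ENNReal.ofReal (B k) * volume (I k) := by
      rw [hm]
      dsimp only
      rw [← setLIntegral_const]
      refine setLIntegral_mono' (hImeas k) fun t ht => ?_
      rw [hGeq t (hIsub k ht)]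
      exact ENNReal.ofReal_le_ofReal (hB k t ht.1 (hIsub k ht).2)
    refine ne_top_of_le_ne_top ?_ hb
    refine ENNReal.mul_ne_top ENNReal.ofReal_ne_top ?_
    rw [hI]
    dsimp only
    rw [Real.volume_Ico]
    exact ENNReal.ofReal_ne_top
  set ε : ℕ → ENNReal := fun k => ENNReal.ofReal ((2⁻¹:ℝ)^k) with hε
  have hεpos : ∀ k, ε k ≠ 0 := by
    intro k
    rw [hε]
    exact (ENNReal.ofReal_pos.2 (by positivity)).ne'
  have hεfin : ∀ k, ε k ≠ ⊤ := fun k => ENNReal.ofReal_ne_top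
  have hεsum : ∑' k, ε k ≠ ⊤ := by
    have hle : ∀ k, ε k ≤ (ENNReal.ofReal 2⁻¹)^k := by
      intro k
      rw [hε]
      exact le_of_eq (ENNReal.ofReal_pow (by norm_num) k)
    refine ne_top_of_le_ne_top ?_ (ENNReal.tsum_le_tsum hle)
    rw [ENNReal.tsum_geometric]
    refine ENNReal.inv_ne_top.2 ?_
    rw [Ne, tsub_eq_zero_iff_le, not_le]
    exact ENNReal.ofReal_lt_one.2 (by norm_num)
  have hnkex : ∀ k, ∃ nn : ℕ,
      m k ≤ (∫⁻ t in I k, ENNReal.ofReal (iconv g R nn t)) + ε k := by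
    intro k
    have hmono' : Monotone fun nn => fun t => ENNReal.ofReal (iconv g R nn t) :=
      fun u v huv => fun t => ENNReal.ofReal_le_ofReal (iconv_mono hR h0 huv t)
    have hms : m k = ⨆ nn, ∫⁻ t in I k, ENNReal.ofReal (iconv g R nn t) := by
      rw [hm]
      dsimp only
      rw [← lintegral_iSup (fun nn => ((iconv_continuous hR h0 nn).measurable).ennreal_ofReal)
        hmono']
    rcases le_total (m k) (ε k) with h | h
    · exact ⟨0, le_trans h le_add_self⟩
    · have hm0 : m k ≠ 0 := by
        intro hm0
        rw [hm0] at h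
        exact hεpos k (le_antisymm h zero_le)
      have hlt : m k - ε k < m k := ENNReal.sub_lt_self (hmfin k) hm0 (hεpos k)
      rw [hms] at hlt
      obtain ⟨nn, hnn⟩ := lt_iSup_iff.1 hlt
      rw [← hms] at hnn
      exact ⟨nn, tsub_le_iff_right.1 (le_of_lt hnn)⟩
  choose nk hnk using hnkex
  -- cutoff functions
  set δ : ℕ → ℝ := fun k => min ((a k - a (k+1)) / 4) ((2⁻¹:ℝ)^k / (2 * B k)) with hδ
  have hδpos : ∀ k, 0 < δ k := fun k => lt_min (by linarith [hasucc k])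
    (div_pos (pow_pos (by norm_num) k) (by linarith [hBpos k]))
  set χ : ℕ → ℝ → ℝ :=
    fun k t => max 0 (min 1 (min ((t - a (k+1)) / δ k) ((a k - t) / δ k))) with hχ
  have hχcont : ∀ k, Continuous (χ k) := by
    intro k
    apply continuous_const.max
    apply continuous_const.min
    exact ((continuous_id.sub continuous_const).div_const _).min
      ((continuous_const.sub continuous_id).div_const _)
  have hχ01 : ∀ k t, 0 ≤ χ k t ∧ χ k t ≤ 1 :=
    fun k t => ⟨le_max_left 0 _, max_le zero_le_one (min_le_left _ _)⟩
  have hχ0 : ∀ k t, t ≤ a (k+1) ∨ a k ≤ t → χ k t = 0 := by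
    intro k t ht
    rw [hχ]
    dsimp only
    apply max_eq_left
    rcases ht with h | h
    · refine le_trans (le_trans (min_le_right _ _) (min_le_left _ _)) ?_
      apply div_nonpos_of_nonpos_of_nonneg (by linarith) (hδpos k).le
    · refine le_trans (le_trans (min_le_right _ _) (min_le_right _ _)) ?_
      apply div_nonpos_of_nonpos_of_nonneg (by linarith) (hδpos k).le
  have hχ1 : ∀ k t, a (k+1) + δ k ≤ t → t ≤ a k - δ k → χ k t = 1 := by
    intro k t h1 h2
    rw [hχ]
    dsimp only
    have hx : (1:ℝ) ≤ (t - a (k+1)) / δ k := (one_le_div (hδpos k)).2 (by linarith)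
    have hy : (1:ℝ) ≤ (a k - t) / δ k := (one_le_div (hδpos k)).2 (by linarith)
    rw [min_eq_left (le_min hx hy), max_eq_right zero_le_one]
  set φ : ℕ → ℝ → ℝ := fun k t => χ k t * iconv g R (nk k) t with hφ
  have hφcont : ∀ k, Continuous (φ k) := fun k => (hχcont k).mul (iconv_continuous hR h0 _)
  have hφnn : ∀ k t, 0 ≤ φ k t := fun k t => mul_nonneg (hχ01 k t).1 (iconv_nonneg hR h0 _ t)
  have hφle : ∀ k t, φ k t ≤ iconv g R (nk k) t :=
    fun k t => mul_le_of_le_one_left (iconv_nonneg hR h0 _ t) (hχ01 k t).2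
  have hφg : ∀ k, ∀ t ∈ Ioo 0 R, φ k t ≤ g t :=
    fun k t ht => le_trans (hφle k t) (iconv_le h0 _ ht)
  have hφ0 : ∀ k t, t ≤ a (k+1) ∨ a k ≤ t → φ k t = 0 := by
    intro k t ht
    rw [hφ]
    dsimp only
    rw [hχ0 k t ht, zero_mul]
  -- integral lower bound for each piece
  have hkey : ∀ k, m k ≤ (∫⁻ t in I k, ENNReal.ofReal (φ k t)) + ε k + ε k := by
    intro k
    set M := Icc (a (k+1) + δ k) (a k - δ k) with hMdef
    have hM : MeasurableSet M := measurableSet_Icc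
    have hsplit : ∫⁻ t in I k, ENNReal.ofReal (iconv g R (nk k) t)
        = (∫⁻ t in I k ∩ M, ENNReal.ofReal (iconv g R (nk k) t))
          + ∫⁻ t in I k \ M, ENNReal.ofReal (iconv g R (nk k) t) :=
      (lintegral_inter_add_diff _ _ hM).symm
    have hmid : ∫⁻ t in I k ∩ M, ENNReal.ofReal (iconv g R (nk k) t)
        ≤ ∫⁻ t in I k, ENNReal.ofReal (φ k t) := by
      have heq : ∫⁻ t in I k ∩ M, ENNReal.ofReal (iconv g R (nk k) t)
          = ∫⁻ t in I k ∩ M, ENNReal.ofReal (φ k t) := by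
        refine setLIntegral_congr_fun ((hImeas k).inter hM) (fun t ht => ?_)
        rw [hφ]
        dsimp only
        rw [hχ1 k t ht.2.1 ht.2.2, one_mul]
      rw [heq]
      exact lintegral_mono_set inter_subset_left
    have hbad : ∫⁻ t in I k \ M, ENNReal.ofReal (iconv g R (nk k) t) ≤ ε k := by
      have hsub : I k \ M ⊆ Ico (a (k+1)) (a (k+1) + δ k) ∪ Ioc (a k - δ k) (a k) := by
        rintro x ⟨hx1, hx2⟩
        rw [hMdef] at hx2
        simp only [mem_Icc, not_and, not_le] at hx2
        rcases lt_or_ge x (a (k+1) + δ k) with h | h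
        · exact Or.inl ⟨hx1.1, h⟩
        · exact Or.inr ⟨hx2 h, hx1.2.le⟩
      calc ∫⁻ t in I k \ M, ENNReal.ofReal (iconv g R (nk k) t)
          ≤ ∫⁻ _ in I k \ M, ENNReal.ofReal (B k) := by
            refine setLIntegral_mono' ((hImeas k).diff hM) fun t ht => ?_
            exact ENNReal.ofReal_le_ofReal (le_trans (iconv_le h0 _ (hIsub k ht.1))
              (hB k t ht.1.1 (hIsub k ht.1).2))
        _ = ENNReal.ofReal (B k) * volume (I k \ M) := setLIntegral_const _ _
        _ ≤ ENNReal.ofReal (B k) * (ENNReal.ofReal (δ k) + ENNReal.ofReal (δ k)) := by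
            refine mul_le_mul_right ?_ _
            refine le_trans (measure_mono hsub) ?_
            refine le_trans (measure_union_le _ _) ?_
            rw [Real.volume_Ico, Real.volume_Ioc, add_sub_cancel_left, sub_sub_cancel]
        _ ≤ ε k := by
            rw [← ENNReal.ofReal_add (hδpos k).le (hδpos k).le,
              ← ENNReal.ofReal_mul (hBpos k).le, hε]
            apply ENNReal.ofReal_le_ofReal
            have hd : δ k ≤ (2⁻¹:ℝ)^k / (2 * B k) := min_le_right _ _
            have hBp := hBpos k
            calc B k * (δ k + δ k) ≤ B k * (2 * ((2⁻¹:ℝ)^k / (2 * B k))) := by nlinarith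
              _ = (2⁻¹:ℝ)^k := by field_simp
    calc m k ≤ (∫⁻ t in I k, ENNReal.ofReal (iconv g R (nk k) t)) + ε k := hnk k
      _ = ((∫⁻ t in I k ∩ M, ENNReal.ofReal (iconv g R (nk k) t))
            + ∫⁻ t in I k \ M, ENNReal.ofReal (iconv g R (nk k) t)) + ε k := by rw [hsplit]
      _ ≤ ((∫⁻ t in I k, ENNReal.ofReal (φ k t)) + ε k) + ε k :=
          add_le_add (add_le_add hmid hbad) le_rfl
  have hcsum : ∑' k, ∫⁻ t in I k, ENNReal.ofReal (φ k t) = ⊤ := by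
    by_contra hne
    have hle : (⊤ : ENNReal) ≤ (∑' k, ∫⁻ t in I k, ENNReal.ofReal (φ k t))
        + (∑' k, ε k) + (∑' k, ε k) := by
      rw [← ENNReal.tsum_add, ← ENNReal.tsum_add, ← hmsum]
      exact ENNReal.tsum_le_tsum hkey
    have hne2 : (∑' k, ∫⁻ t in I k, ENNReal.ofReal (φ k t))
        + (∑' k, ε k) + (∑' k, ε k) ≠ ⊤ :=
      ENNReal.add_ne_top.2 ⟨ENNReal.add_ne_top.2 ⟨hne, hεsum⟩, hεsum⟩
    exact hne2 (top_le_iff.1 hle)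
  -- the glued function
  set Φ : ℝ → ℝ := fun t => ∑' k, φ k t with hΦdef
  have hrep1 : ∀ t, a 1 < t → Φ t = φ 0 t := by
    intro t ht
    simp only [hΦdef]
    refine tsum_eq_single 0 fun j hj => ?_
    refine hφ0 j t (Or.inr ?_)
    have : a j ≤ a 1 := haanti.antitone (by omega)
    linarith
  have hrep2 : ∀ k t, t ∈ Ioo (a (k+2)) (a k) → Φ t = φ k t + φ (k+1) t := by
    intro k t ht
    simp only [hΦdef]
    have hz : ∀ j ∉ ({k, k+1} : Finset ℕ), φ j t = 0 := by
      intro j hj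
      simp only [Finset.mem_insert, Finset.mem_singleton] at hj
      push_neg at hj
      rcases lt_or_gt_of_ne hj.1 with h | h
      · refine hφ0 j t (Or.inl ?_)
        have : a k ≤ a (j+1) := haanti.antitone (by omega)
        linarith [ht.2]
      · refine hφ0 j t (Or.inr ?_)
        have : a j ≤ a (k+2) := haanti.antitone (by omega)
        linarith [ht.1]
    rw [tsum_eq_sum hz, Finset.sum_insert (by simp), Finset.sum_singleton]
  have hcover : ∀ t, 0 < t → t ≤ a 1 → ∃ k, t ∈ Ioo (a (k+2)) (a k) := by
    intro t ht hta
    have hex : ∃ j, a j ≤ t := by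
      obtain ⟨j, hj⟩ := pow_unbounded_of_one_lt (R := ℝ) ((R/4) / t) one_lt_two
      refine ⟨j, ?_⟩
      rw [ha]
      rw [div_lt_iff₀ ht] at hj
      rw [div_le_iff₀ (by positivity : (0:ℝ) < 2^j)]
      nlinarith
    have hspec : a (Nat.find hex) ≤ t := Nat.find_spec hex
    have hne : Nat.find hex ≠ 0 := by
      intro h
      rw [h, ha0] at hspec
      have h1R : a 1 < a 0 := hasucc 0
      rw [ha0] at h1R
      linarith
    obtain ⟨k, hk⟩ := Nat.exists_eq_succ_of_ne_zero hne
    refine ⟨k, ?_, ?_⟩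
    · have h1 : a (k+1) ≤ t := by
        have hk' : k + 1 = Nat.find hex := by omega
        rw [hk']
        exact hspec
      linarith [hasucc (k+1)]
    · by_contra hcon
      push_neg at hcon
      exact Nat.find_min hex (by omega) hcon
  have hΦcont : ∀ t, 0 < t → ContinuousAt Φ t := by
    intro t ht
    rcases lt_or_ge (a 1) t with h | h
    · have hev : (fun s => φ 0 s) =ᶠ[nhds t] Φ :=
        Filter.eventuallyEq_of_mem (isOpen_Ioi.mem_nhds h) (fun x hx => (hrep1 x hx).symm)
      exact ((hφcont 0).continuousAt).congr hev
    · obtain ⟨k, hk⟩ := hcover t ht h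
      have hev : (fun s => φ k s + φ (k+1) s) =ᶠ[nhds t] Φ :=
        Filter.eventuallyEq_of_mem (isOpen_Ioo.mem_nhds hk) (fun x hx => (hrep2 k x hx).symm)
      exact (((hφcont k).add (hφcont (k+1))).continuousAt).congr hev
  have hΦnn : ∀ t, 0 ≤ Φ t := fun t => tsum_nonneg (fun k => hφnn k t)
  have hΦg : ∀ t ∈ Ioo 0 R, Φ t ≤ g t := by
    intro t ht
    rcases lt_or_ge (a 1) t with h | h
    · rw [hrep1 t h]
      exact hφg 0 t ht
    · obtain ⟨k, hk⟩ := hcover t ht.1 h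
      rw [hrep2 k t hk]
      rcases le_or_gt t (a (k+1)) with h2 | h2
      · rw [hφ0 k t (Or.inl h2), zero_add]
        exact hφg (k+1) t ht
      · rw [hφ0 (k+1) t (Or.inr h2.le), add_zero]
        exact hφg k t ht
  have hΦge : ∀ k, ∀ t ∈ I k, φ k t ≤ Φ t := by
    intro k t ht
    rcases eq_or_lt_of_le ht.1 with h | h
    · rw [hφ0 k t (Or.inl h.ge)]
      exact hΦnn t
    · have hmem : t ∈ Ioo (a (k+2)) (a k) := ⟨lt_trans (hasucc (k+1)) h, ht.2⟩
      rw [hrep2 k t hmem]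
      linarith [hφnn (k+1) t]
  have hΦtop : ∫⁻ t in Ioo 0 (R/4), ENNReal.ofReal (Φ t) = ⊤ := by
    apply top_unique
    rw [← hIunion, lintegral_iUnion hImeas hIdisj, ← hcsum]
    exact ENNReal.tsum_le_tsum (fun k => setLIntegral_mono' (hImeas k)
      fun t ht => ENNReal.ofReal_le_ofReal (hΦge k t ht))
  -- final function
  refine ⟨fun t => max (iconv g R 1 t) (Φ t), ?_, ?_, ?_, ?_⟩
  · intro t ht
    exact ((iconv_continuous hR h0 1).continuousAt).max (hΦcont t ht)
  · intro t ht
    exact lt_of_lt_of_le (iconv_pos hR h0 hlb ht) (le_max_left _ _)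
  · intro t ht
    exact max_le (iconv_le h0 1 ht) (hΦg t ht)
  · intro hint
    have hfi := hint.2
    rw [hasFiniteIntegral_iff_norm] at hfi
    have hle : (⊤:ENNReal) ≤ ∫⁻ t in Ioo 0 (R/4),
        ENNReal.ofReal ‖max (iconv g R 1 t) (Φ t)‖ := by
      rw [← hΦtop]
      refine lintegral_mono fun t => ENNReal.ofReal_le_ofReal ?_
      rw [Real.norm_eq_abs]
      exact le_trans (le_max_right _ _) (le_abs_self _)
    exact absurd hfi (not_lt.2 hle)

end minorant

variable {n : ℕ}

noncomputable def betaK (f : EuclideanSpace ℝ (Fin n) → ℝ)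
    (K : Set (EuclideanSpace ℝ (Fin n))) (t : ℝ) : ℝ :=
  sInf {y : ℝ | ∃ x ∈ K, f x = t ∧ y = ‖gradient f x‖⁻¹}



theorem beta_not_integrable_implies_opposite_gradient_inequality (n : ℕ) (hn : 1 ≤ n)
    (f : EuclideanSpace ℝ (Fin n) → ℝ)
    (hf : Continuous f) (hf0 : ∀ x, 0 ≤ f x)
    (hZ : (f ⁻¹' {0}).Nonempty)
    (hC1 : ContDiffOn ℝ 1 f (f ⁻¹' {0})ᶜ)
    (p : EuclideanSpace ℝ (Fin n)) (hp : p ∈ frontier (f ⁻¹' {0}))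
    (Up : Set (EuclideanSpace ℝ (Fin n))) (hUp : IsOpen Up) (hpUp : p ∈ Up)
    (hsimple : ∀ x ∈ Up, f x ≠ 0 → gradient f x ≠ 0)
    (K : Set (EuclideanSpace ℝ (Fin n))) (hK : IsCompact K) (hKsub : K ⊆ Up)
    (hKnhds : K ∈ nhds p)
    (ρ : ℝ) (hρ : 0 < ρ)
    (hlevel : ∀ t ∈ Ioo (0:ℝ) ρ, {x ∈ K | f x = t}.Nonempty)
    (hbeta_not_int : ¬ IntegrableOn (betaK f K) (Ioo 0 ρ)) :
    ∃ ρ' > (0:ℝ), ∃ U : Set (EuclideanSpace ℝ (Fin n)), IsOpen U ∧ p ∈ U ∧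
      ∃ b : ℝ → ℝ, ContinuousOn b (Ioc 0 ρ') ∧ (∀ t ∈ Ioc (0:ℝ) ρ', 0 < b t) ∧
        ¬ IntegrableOn (fun t => (b t)⁻¹) (Ioo 0 ρ') ∧
        ∀ x ∈ U, 0 < f x → f x ≤ ρ' → ‖gradient f x‖ ≤ b (f x) := by
  have hZclosed : IsClosed (f ⁻¹' {0}) := isClosed_singleton.preimage hf
  have hZc : IsOpen (f ⁻¹' {0})ᶜ := hZclosed.isOpen_compl
  have hgrad : ContinuousOn (fun x => gradient f x) (f ⁻¹' {0})ᶜ := by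
    have h1 := hC1.continuousOn_fderiv_of_isOpen hZc (le_refl 1)
    exact ((InnerProductSpace.toDual ℝ
      (EuclideanSpace ℝ (Fin n))).symm.continuous.comp_continuousOn h1)
  have hnormgrad : ContinuousOn (fun x => ‖gradient f x‖) (f ⁻¹' {0})ᶜ := hgrad.norm
  have hbdd : ∀ t, BddBelow {y : ℝ | ∃ x ∈ K, f x = t ∧ y = ‖gradient f x‖⁻¹} := by
    intro t
    refine ⟨0, fun y hy => ?_⟩
    obtain ⟨x, hx, hfx, rfl⟩ := hy
    positivity
  have h0 : ∀ t, 0 ≤ betaK f K t := by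
    intro t
    apply Real.sInf_nonneg
    rintro y ⟨x, hx, hfx, rfl⟩
    positivity
  -- slab bounds
  have hslab : ∀ a, 0 < a → a < ρ →
      (∃ c > 0, ∀ t, a ≤ t → t < ρ → c ≤ betaK f K t) ∧
      (∃ C, ∀ t, a ≤ t → t < ρ → betaK f K t ≤ C) := by
    intro a ha0 haρ
    set S := K ∩ f ⁻¹' (Icc a ρ) with hS
    have hScpt : IsCompact S := hK.inter_right (isClosed_Icc.preimage hf)
    have hSne : S.Nonempty := by
      obtain ⟨x, hxK, hfx⟩ := hlevel ((a+ρ)/2) ⟨by linarith, by linarith⟩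
      exact ⟨x, hxK, by rw [mem_preimage, hfx]; exact ⟨by linarith, by linarith⟩⟩
    have hSsub : S ⊆ (f ⁻¹' {0})ᶜ := by
      intro x hx
      simp only [mem_compl_iff, mem_preimage, mem_singleton_iff]
      have h1 : a ≤ f x := hx.2.1
      intro h
      rw [h] at h1
      linarith
    have hcont : ContinuousOn (fun x => ‖gradient f x‖) S := hnormgrad.mono hSsub
    obtain ⟨xM, hxM, hxMmax⟩ := hScpt.exists_isMaxOn hSne hcont
    obtain ⟨xm, hxm, hxmmin⟩ := hScpt.exists_isMinOn hSne hcont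
    have hgradne : ∀ x, x ∈ S → gradient f x ≠ 0 := by
      intro x hx
      exact hsimple x (hKsub hx.1) (lt_of_lt_of_le ha0 hx.2.1).ne'
    constructor
    · refine ⟨‖gradient f xM‖⁻¹, inv_pos.2 (norm_pos_iff.2 (hgradne xM hxM)), ?_⟩
      intro t hat htρ
      obtain ⟨x0, hx0K, hfx0⟩ := hlevel t ⟨lt_of_lt_of_le ha0 hat, htρ⟩
      refine le_csInf ⟨_, ⟨x0, hx0K, hfx0, rfl⟩⟩ ?_
      rintro y ⟨x, hxK, hfx, rfl⟩
      have hxS : x ∈ S := ⟨hxK, by rw [mem_preimage, hfx]; exact ⟨hat, htρ.le⟩⟩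
      exact inv_anti₀ (norm_pos_iff.2 (hgradne x hxS)) (hxMmax hxS)
    · refine ⟨‖gradient f xm‖⁻¹, ?_⟩
      intro t hat htρ
      obtain ⟨x0, hx0K, hfx0⟩ := hlevel t ⟨lt_of_lt_of_le ha0 hat, htρ⟩
      have hx0S : x0 ∈ S := ⟨hx0K, by rw [mem_preimage, hfx0]; exact ⟨hat, htρ.le⟩⟩
      refine le_trans (csInf_le (hbdd t) ⟨x0, hx0K, hfx0, rfl⟩) ?_
      exact inv_anti₀ (norm_pos_iff.2 (hgradne xm hxm)) (hxmmin hx0S)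
  -- attainment of the infimum
  have hattain : ∀ t, t ∈ Ioo 0 ρ →
      ∃ x, x ∈ K ∧ f x = t ∧ betaK f K t = ‖gradient f x‖⁻¹ := by
    intro t ht
    set L := K ∩ f ⁻¹' {t} with hL
    have hLcpt : IsCompact L := hK.inter_right (isClosed_singleton.preimage hf)
    have hLne : L.Nonempty := by
      obtain ⟨x, h1, h2⟩ := hlevel t ht
      exact ⟨x, h1, h2⟩
    have hLgrad : ∀ x, x ∈ L → gradient f x ≠ 0 := by
      intro x hx
      have : f x = t := hx.2
      exact hsimple x (hKsub hx.1) (by rw [this]; exact ht.1.ne')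
    have hLsub : L ⊆ (f ⁻¹' {0})ᶜ := by
      intro x hx
      simp only [mem_compl_iff, mem_preimage, mem_singleton_iff]
      have : f x = t := hx.2
      rw [this]
      exact ht.1.ne'
    have hcont : ContinuousOn (fun x => ‖gradient f x‖⁻¹) L := by
      refine ContinuousOn.inv₀ (hnormgrad.mono hLsub) ?_
      intro x hx
      exact (norm_pos_iff.2 (hLgrad x hx)).ne'
    obtain ⟨x0, hx0, hmin⟩ := hLcpt.exists_isMinOn hLne hcont
    refine ⟨x0, hx0.1, hx0.2, ?_⟩
    refine (IsLeast.csInf_eq ⟨⟨x0, hx0.1, hx0.2, rfl⟩, ?_⟩)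
    rintro y ⟨x, hxK, hfx, rfl⟩
    exact hmin ⟨hxK, hfx⟩
  -- lower semicontinuity
  have hlsc : ∀ t ∈ Ioo 0 ρ, ∀ ε > 0, ∃ δ > 0, ∀ s ∈ Ioo 0 ρ,
      |s - t| < δ → betaK f K t - ε < betaK f K s := by
    intro t ht ε hε
    by_contra hcon
    push_neg at hcon
    have hseq : ∀ j : ℕ, ∃ s, s ∈ Ioo 0 ρ ∧ |s - t| < 1/(j+1) ∧
        betaK f K s ≤ betaK f K t - ε := by
      intro j
      obtain ⟨s, hs1, hs2, hs3⟩ := hcon (1/(j+1)) (by positivity)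
      exact ⟨s, hs1, hs2, hs3⟩
    choose s hs1 hs2 hs3 using hseq
    have hst : Filter.Tendsto s Filter.atTop (nhds t) := by
      rw [Metric.tendsto_atTop]
      intro ε' hε'
      obtain ⟨N, hN⟩ := exists_nat_one_div_lt hε'
      refine ⟨N, fun j hj => ?_⟩
      rw [Real.dist_eq]
      refine lt_of_lt_of_le (hs2 j) ?_
      refine le_trans ?_ hN.le
      apply one_div_le_one_div_of_le (by positivity)
      exact_mod_cast by omega
    choose x hxK hfx hbx using (fun j => hattain (s j) (hs1 j))
    obtain ⟨x0, hx0K, ψ, hψmono, hψtend⟩ := hK.tendsto_subseq hxK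
    have hfx0 : f x0 = t := by
      have h1 : Filter.Tendsto (fun j => f (x (ψ j))) Filter.atTop (nhds (f x0)) :=
        (hf.tendsto x0).comp hψtend
      have h2 : Filter.Tendsto (fun j => f (x (ψ j))) Filter.atTop (nhds t) := by
        have he : (fun j => f (x (ψ j))) = fun j => s (ψ j) := funext fun j => hfx (ψ j)
        rw [he]
        exact hst.comp hψmono.tendsto_atTop
      exact tendsto_nhds_unique h1 h2
    have hx0Z : x0 ∈ (f ⁻¹' {0})ᶜ := by
      simp only [mem_compl_iff, mem_preimage, mem_singleton_iff, hfx0]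
      exact ht.1.ne'
    have hca : ContinuousAt (fun y => ‖gradient f y‖⁻¹) x0 := by
      have h1 : ContinuousAt (fun y => ‖gradient f y‖) x0 :=
        hnormgrad.continuousAt (hZc.mem_nhds hx0Z)
      exact h1.inv₀ (norm_pos_iff.2 (hsimple x0 (hKsub hx0K)
        (by rw [hfx0]; exact ht.1.ne'))).ne'
    have hlim : Filter.Tendsto (fun j => ‖gradient f (x (ψ j))‖⁻¹) Filter.atTop
        (nhds (‖gradient f x0‖⁻¹)) := hca.tendsto.comp hψtend
    have hle : ‖gradient f x0‖⁻¹ ≤ betaK f K t - ε := by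
      refine le_of_tendsto hlim (Filter.Eventually.of_forall fun j => ?_)
      have h3 := hs3 (ψ j)
      rw [hbx (ψ j)] at h3
      exact h3
    have hge : betaK f K t ≤ ‖gradient f x0‖⁻¹ := csInf_le (hbdd t) ⟨x0, hx0K, hfx0, rfl⟩
    linarith
  -- apply the minorant lemma
  obtain ⟨h, hcont, hpos, hle, hni⟩ := exists_minorant hρ h0
    (fun a h1 h2 => (hslab a h1 h2).1) (fun a h1 h2 => (hslab a h1 h2).2)
    hlsc hbeta_not_int
  refine ⟨ρ/4, by linarith, interior K, isOpen_interior,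
    mem_interior_iff_mem_nhds.2 hKnhds, fun t => (h t)⁻¹, ?_, ?_, ?_, ?_⟩
  · intro t htmem
    exact (((hcont t htmem.1).inv₀ (hpos t htmem.1).ne')).continuousWithinAt
  · intro t htmem
    exact inv_pos.2 (hpos t htmem.1)
  · have he : (fun t => ((h t)⁻¹)⁻¹) = h := funext fun t => inv_inv _
    rw [he]
    exact hni
  · intro x hxU hfx0 hfxρ'
    have hxK : x ∈ K := interior_subset hxU
    have htmem : f x ∈ Ioo 0 ρ := ⟨hfx0, by linarith⟩
    have h1 : betaK f K (f x) ≤ ‖gradient f x‖⁻¹ :=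
      csInf_le (hbdd (f x)) ⟨x, hxK, rfl, rfl⟩
    have h2 : h (f x) ≤ ‖gradient f x‖⁻¹ := le_trans (hle (f x) htmem) h1
    have h3 : 0 < h (f x) := hpos (f x) hfx0
    calc ‖gradient f x‖ = (‖gradient f x‖⁻¹)⁻¹ := (inv_inv _).symm
      _ ≤ (h (f x))⁻¹ := inv_anti₀ h3 h2
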